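/- Let G be a finite connected simple graph of order n, not isomorphic to the complete graph K_n, such that 2·τ(G) > n, and let W be its (unique) twin class of cardinality τ(G). Then τ(G) ≤ β_p(G) and 2·β_p(G) ≤ n + τ(G). Moreover: (1) β_p(G) = τ(G) if and only if W induces an empty (edgeless) subgraph of G; and (2) τ(G) < β_p(G) and 2·β_p(G) ≤ n + τ(G) holds with W inducing a complete subgraph of G if and only if W induces a complete subgraph of G (equivalently, β_p(G) > τ(G) if and only if the subgraph of G induced by W is complete). -/

import Mathlib

open Classical SimpleGraph

noncomputable section

/-- The distance from a vertex to a set of vertices. -/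
def setDist {V : Type*} (G : SimpleGraph V) (u : V) (S : Set V) : ℕ :=
  sInf ((G.dist u) '' S)

/-- A locating partition of a graph: a partition of the vertex set such that every
vertex is uniquely determined by its vector of distances to the parts. -/
def IsLocatingPartition {V : Type*} (G : SimpleGraph V) (P : Set (Set V)) : Prop :=
  Setoid.IsPartition P ∧
    ∀ u v : V, (∀ S ∈ P, setDist G u S = setDist G v S) → u = v

/-- The partition dimension: the minimum cardinality of a locating partition. -/
def partitionDim {V : Type*} (G : SimpleGraph V) : ℕ :=
  sInf {k | ∃ P : Set (Set V), IsLocatingPartition G P ∧ P.ncard = k}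

/-- Two vertices are twins if they have the same neighbors other than themselves. -/
def IsTwin {V : Type*} (G : SimpleGraph V) (u v : V) : Prop :=
  G.neighborSet u \ {v} = G.neighborSet v \ {u}

/-- The twin class of a vertex. -/
def twinClass {V : Type*} (G : SimpleGraph V) (u : V) : Set V :=
  {v | IsTwin G u v}

/-- The twin number: the maximum cardinality of a twin class. -/
def twinNumber {V : Type*} (G : SimpleGraph V) : ℕ :=
  sSup {k | ∃ u : V, (twinClass G u).ncard = k}

section Aux
variable {V : Type*} {G : SimpleGraph V} {u v x y w a u₀ : V} {S T W : Set V}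

lemma aux_setDist_le (hx : x ∈ S) : setDist G u S ≤ G.dist u x :=
  Nat.sInf_le ⟨x, hx, rfl⟩

lemma aux_setDist_exists (hS : S.Nonempty) : ∃ x ∈ S, setDist G u S = G.dist u x := by
  obtain ⟨x, hx, h⟩ := Nat.sInf_mem (hS.image (G.dist u))
  exact ⟨x, hx, h.symm⟩

lemma aux_setDist_singleton : setDist G u {a} = G.dist u a := by
  simp [setDist]

lemma aux_setDist_eq_zero (hG : G.Connected) (hS : S.Nonempty) :
    setDist G u S = 0 ↔ u ∈ S := by
  constructor
  · intro h
    obtain ⟨x, hx, hd⟩ := aux_setDist_exists (u := u) hS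
    rw [h] at hd
    rwa [(hG.dist_eq_zero_iff).mp hd.symm]
  · intro h
    have h2 := aux_setDist_le (G := G) (u := u) h
    simp only [G.dist_self] at h2
    omega

lemma aux_setDist_pos (hG : G.Connected) (hS : S.Nonempty) (hu : u ∉ S) :
    1 ≤ setDist G u S := by
  rcases Nat.eq_zero_or_pos (setDist G u S) with h | h
  · exact absurd ((aux_setDist_eq_zero hG hS).mp h) hu
  · exact h

lemma aux_two_le_setDist (hG : G.Connected) (hS : S.Nonempty) (hu : u ∉ S)
    (hadj : ∀ s ∈ S, ¬ G.Adj u s) : 2 ≤ setDist G u S := by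
  obtain ⟨x, hx, hd⟩ := aux_setDist_exists (u := u) hS
  rw [hd]
  have h0 : G.dist u x ≠ 0 := by
    intro h
    exact hu (hG.dist_eq_zero_iff.mp h ▸ hx)
  have h1 : G.dist u x ≠ 1 := by
    intro h
    exact hadj x hx (dist_eq_one_iff_adj.mp h)
  omega

lemma aux_setDist_congr (h : ∀ x ∈ S, G.dist u x = G.dist v x) :
    setDist G u S = setDist G v S := by
  unfold setDist
  rw [Set.image_congr h]

lemma aux_isTwin_refl : IsTwin G u u := rfl

lemma aux_isTwin_symm (h : IsTwin G u v) : IsTwin G v u := h.symm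

lemma aux_twin_adj (h : IsTwin G u v) (hy1 : y ≠ u) (hy2 : y ≠ v) :
    G.Adj u y ↔ G.Adj v y := by
  constructor
  · intro ha
    have : y ∈ G.neighborSet u \ {v} := ⟨ha, hy2⟩
    rw [h] at this
    exact this.1
  · intro ha
    have : y ∈ G.neighborSet v \ {u} := ⟨ha, hy1⟩
    rw [← h] at this
    exact this.1

lemma aux_isTwin_of_adj_iff (h : ∀ y, y ≠ u → y ≠ v → (G.Adj u y ↔ G.Adj v y)) :
    IsTwin G u v := by
  ext z
  simp only [Set.mem_diff, SimpleGraph.mem_neighborSet, Set.mem_singleton_iff]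
  constructor
  · rintro ⟨ha, hz⟩
    have hzu : z ≠ u := fun h' => G.irrefl (h' ▸ ha)
    exact ⟨(h z hzu hz).mp ha, hzu⟩
  · rintro ⟨ha, hz⟩
    have hzv : z ≠ v := fun h' => G.irrefl (h' ▸ ha)
    exact ⟨(h z hz hzv).mpr ha, hzv⟩

lemma aux_isTwin_trans (h1 : IsTwin G u v) (h2 : IsTwin G v x) : IsTwin G u x := by
  by_cases huv : u = v
  · exact huv ▸ h2
  by_cases hvx : v = x
  · exact hvx ▸ h1
  apply aux_isTwin_of_adj_iff
  intro z hzu hzx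
  by_cases hzv : z ≠ v
  · exact (aux_twin_adj h1 hzu hzv).trans (aux_twin_adj h2 hzv hzx)
  push_neg at hzv
  subst hzv
  by_cases hux : u = x
  · subst hux; exact Iff.rfl
  constructor
  · intro ha
    have hu' : u ∈ G.neighborSet z \ {x} := ⟨ha.symm, by simp [hux]⟩
    rw [h2] at hu'
    have hxu : G.Adj x u := hu'.1
    have hx' : x ∈ G.neighborSet u \ {z} := ⟨hxu.symm, by simp; exact fun h' => hzx h'.symm⟩
    rw [h1] at hx'
    exact (hx'.1).symm
  · intro ha
    have hx' : x ∈ G.neighborSet z \ {u} := ⟨ha.symm, by simp; exact fun h' => hux h'.symm⟩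
    rw [← h1] at hx'
    have hux' : G.Adj u x := hx'.1
    have hu' : u ∈ G.neighborSet x \ {z} := ⟨hux'.symm, by simp; exact fun h' => hzu h'.symm⟩
    rw [← h2] at hu'
    exact (hu'.1).symm

lemma aux_twinClass_eq (h : IsTwin G u v) : twinClass G u = twinClass G v := by
  ext z
  exact ⟨fun hz => aux_isTwin_trans (aux_isTwin_symm h) hz,
    fun hz => aux_isTwin_trans h hz⟩

end Aux

section Aux2
variable {V : Type*} {G : SimpleGraph V} {u v x y w w' u₀ : V} {S T W : Set V}

lemma aux_twin_dist_le (hG : G.Connected) (h : IsTwin G u v) (hx : x ≠ u) :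
    G.dist v x ≤ G.dist u x := by
  by_cases huv : u = v
  · exact le_of_eq (huv ▸ rfl)
  obtain ⟨p, hp⟩ := (hG u x).exists_walk_length_eq_dist
  cases p with
  | nil => exact absurd rfl hx.symm
  | @cons _ y _ hadj q =>
    by_cases hyv : y = v
    · subst hyv
      have h1 : G.dist y x ≤ q.length := G.dist_le q
      have h2 : q.length + 1 = G.dist u x := by simpa using hp
      omega
    · have hmem : y ∈ G.neighborSet u \ {v} := ⟨hadj, hyv⟩
      rw [h] at hmem
      have h1 : G.dist v x ≤ (SimpleGraph.Walk.cons hmem.1 q).length := G.dist_le _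
      have h2 : q.length + 1 = G.dist u x := by simpa using hp
      change G.dist v x ≤ q.length + 1 at h1
      omega

lemma aux_twin_dist (hG : G.Connected) (h : IsTwin G u v) (hx1 : x ≠ u) (hx2 : x ≠ v) :
    G.dist x u = G.dist x v := by
  have h1 := aux_twin_dist_le hG h hx1
  have h2 := aux_twin_dist_le hG (aux_isTwin_symm h) hx2
  calc G.dist x u = G.dist u x := SimpleGraph.dist_comm
    _ = G.dist v x := le_antisymm h2 h1
    _ = G.dist x v := SimpleGraph.dist_comm

variable (hW : W = twinClass G u₀)

include hW in
lemma aux_mem_W_twin (hw : w ∈ W) : IsTwin G u₀ w := by rw [hW] at hw; exact hw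

include hW in
lemma aux_u₀_mem_W : u₀ ∈ W := by rw [hW]; exact aux_isTwin_refl

include hW in
lemma aux_W_twin (hw : w ∈ W) (hw' : w' ∈ W) : IsTwin G w w' :=
  aux_isTwin_trans (aux_isTwin_symm (aux_mem_W_twin hW hw)) (aux_mem_W_twin hW hw')

include hW in
lemma aux_W_closed (hw : w ∈ W) (h : IsTwin G w x) : x ∈ W := by
  rw [hW]
  exact aux_isTwin_trans (aux_mem_W_twin hW hw) h

include hW in
lemma aux_dist_to_W (hG : G.Connected) (hx : x ∉ W) (hw : w ∈ W) :
    G.dist x w = G.dist x u₀ := by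
  by_cases h : w = u₀
  · rw [h]
  · exact (aux_twin_dist hG (aux_mem_W_twin hW hw)
      (fun hc => hx (by rw [hc]; exact aux_u₀_mem_W hW))
      (fun hc => hx (by rw [hc]; exact hw))).symm

include hW in
lemma aux_W_dichotomy :
    (∀ a ∈ W, ∀ b ∈ W, ¬ G.Adj a b) ∨ (∀ a ∈ W, ∀ b ∈ W, a ≠ b → G.Adj a b) := by
  by_cases h : ∃ a ∈ W, ∃ b ∈ W, G.Adj a b
  · right
    obtain ⟨a, ha, b, hb, hab⟩ := h
    have hne : a ≠ b := hab.ne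
    have claim : ∀ c ∈ W, c ≠ b → G.Adj c b := by
      intro c hc hcb
      by_cases hca : c = a
      · exact hca ▸ hab
      · exact ((aux_twin_adj (aux_W_twin hW ha hc) (Ne.symm hne) (Ne.symm hcb)).mp hab)
    intro c hc d hd hcd
    by_cases hdb : d = b
    · have := claim c hc (fun h' => hcd (h'.trans hdb.symm))
      rw [hdb]; exact this
    · have h1 : G.Adj d b := claim d hd hdb
      by_cases hcb : c = b
      · rw [hcb]; exact h1.symm
      · exact ((aux_twin_adj (aux_W_twin hW hb hd) hcb hcd).mp (claim c hc hcb).symm).symm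
  · left
    intro a ha b hb hab
    exact h ⟨a, ha, b, hb, hab⟩

include hW in
lemma aux_L1_adj_all (hx : x ∉ W) (hadj : G.Adj x u₀) (hw : w ∈ W) : G.Adj x w := by
  by_cases h : w = u₀
  · exact h ▸ hadj
  · have hmem : x ∈ G.neighborSet u₀ \ {w} := ⟨hadj.symm, fun hc => hx (by
      rw [Set.mem_singleton_iff] at hc; rw [hc]; exact hw)⟩
    rw [aux_mem_W_twin hW hw] at hmem
    exact hmem.1.symm

include hW in
lemma aux_L1_nonempty [Fintype V] (hG : G.Connected) (hD : ∃ z, z ∉ W) :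
    ∃ x ∉ W, G.Adj x u₀ := by
  classical
  obtain ⟨z, hz⟩ := hD
  obtain ⟨x, hx, hmin⟩ := Finset.exists_min_image (Finset.univ.filter (· ∉ W))
    (fun a => G.dist a u₀) ⟨z, by simp [hz]⟩
  simp only [Finset.mem_filter, Finset.mem_univ, true_and] at hx hmin
  have hd0 : G.dist x u₀ ≠ 0 := by
    intro h
    exact hx ((hG.dist_eq_zero_iff.mp h) ▸ aux_u₀_mem_W hW)
  obtain ⟨p, hp⟩ := (hG x u₀).exists_walk_length_eq_dist
  cases p with
  | nil => simp at hd0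
  | @cons _ y _ hadj q =>
    by_cases hyW : y ∈ W
    · by_cases hyu : y = u₀
      · exact ⟨x, hx, hyu ▸ hadj⟩
      · have hmem : x ∈ G.neighborSet y \ {u₀} := ⟨hadj.symm, fun hc => hx (by
          rw [Set.mem_singleton_iff] at hc; rw [hc]; exact aux_u₀_mem_W hW)⟩
        rw [← aux_mem_W_twin hW hyW] at hmem
        exact ⟨x, hx, hmem.1.symm⟩
    · have h1 : G.dist y u₀ ≤ q.length := G.dist_le q
      have h2 : q.length + 1 = G.dist x u₀ := by simpa using hp
      have h3 := hmin y hyW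
      omega

end Aux2

section Aux3
variable {V : Type*} {G : SimpleGraph V} {u v x y w w' u₀ a b : V} {S T : Set V}

/-- the generic partition: one part per element of `W` (therein its `g`-preimage
from `Wᶜ \ Y`), plus singleton parts for elements of `Y`. -/
def auxPart {V : Type*} (W Y : Set V) (g : V → V) (w : V) : Set V :=
  insert w {x | (x ∈ Wᶜ \ Y) ∧ g x = w}

def auxP {V : Type*} (W Y : Set V) (g : V → V) : Set (Set V) :=
  (auxPart W Y g '' W) ∪ ((fun y => ({y} : Set V)) '' Y)

variable {W Y : Set V} {g : V → V}

lemma aux_mem_auxPart : a ∈ auxPart W Y g w ↔ a = w ∨ ((a ∈ Wᶜ \ Y) ∧ g a = w) := by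
  simp [auxPart]

lemma aux_self_mem_auxPart : w ∈ auxPart W Y g w := Set.mem_insert _ _

lemma aux_part_mem (hw : w ∈ W) : auxPart W Y g w ∈ auxP W Y g :=
  Set.mem_union_left _ ⟨w, hw, rfl⟩

lemma aux_single_mem (hy : y ∈ Y) : ({y} : Set V) ∈ auxP W Y g :=
  Set.mem_union_right _ ⟨y, hy, rfl⟩

lemma aux_part_unique_form (hS : S ∈ auxP W Y g) :
    (∃ w ∈ W, S = auxPart W Y g w) ∨ ∃ y ∈ Y, S = ({y} : Set V) := by
  rcases hS with ⟨w, hw, rfl⟩ | ⟨y, hy, rfl⟩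
  · exact Or.inl ⟨w, hw, rfl⟩
  · exact Or.inr ⟨y, hy, rfl⟩

lemma aux_auxP_isPartition (hYD : Y ⊆ Wᶜ) (hg2 : ∀ x ∈ Wᶜ \ Y, g x ∈ W) :
    Setoid.IsPartition (auxP W Y g) := by
  constructor
  · intro h
    rcases aux_part_unique_form h with ⟨w, hw, he⟩ | ⟨y, hy, he⟩
    · exact Set.notMem_empty w (by rw [he]; exact aux_self_mem_auxPart)
    · exact Set.notMem_empty y (by rw [he]; exact rfl)
  · intro a
    by_cases haW : a ∈ W
    · refine ⟨auxPart W Y g a, ⟨aux_part_mem haW, aux_self_mem_auxPart⟩, ?_⟩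
      rintro S ⟨hS, haS⟩
      rcases aux_part_unique_form hS with ⟨w, hw, rfl⟩ | ⟨y, hy, rfl⟩
      · rcases aux_mem_auxPart.mp haS with rfl | ⟨hmem, _⟩
        · rfl
        · exact absurd haW hmem.1
      · rw [Set.mem_singleton_iff] at haS
        subst haS
        exact absurd haW (hYD hy)
    · by_cases haY : a ∈ Y
      · refine ⟨({a} : Set V), ⟨aux_single_mem haY, rfl⟩, ?_⟩
        rintro S ⟨hS, haS⟩
        rcases aux_part_unique_form hS with ⟨w, hw, rfl⟩ | ⟨y, hy, rfl⟩
        · rcases aux_mem_auxPart.mp haS with rfl | ⟨hmem, _⟩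
          · exact absurd hw haW
          · exact absurd haY hmem.2
        · rw [Set.mem_singleton_iff] at haS
          subst haS
          rfl
      · have haD : a ∈ Wᶜ \ Y := ⟨haW, haY⟩
        refine ⟨auxPart W Y g (g a), ⟨aux_part_mem (hg2 a haD), aux_mem_auxPart.mpr
          (Or.inr ⟨haD, rfl⟩)⟩, ?_⟩
        rintro S ⟨hS, haS⟩
        rcases aux_part_unique_form hS with ⟨w, hw, rfl⟩ | ⟨y, hy, rfl⟩
        · rcases aux_mem_auxPart.mp haS with rfl | ⟨hmem, hga⟩
          · exact absurd hw haW
          · rw [hga]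
        · rw [Set.mem_singleton_iff] at haS
          subst haS
          exact absurd hy haY

lemma aux_auxP_ncard [Fintype V] (hYD : Y ⊆ Wᶜ) :
    (auxP W Y g).ncard = W.ncard + Y.ncard := by
  classical
  have hinj1 : Set.InjOn (auxPart W Y g) W := by
    intro w1 h1 w2 h2 he
    have : w2 ∈ auxPart W Y g w1 := he ▸ aux_self_mem_auxPart
    rcases aux_mem_auxPart.mp this with h | ⟨hmem, _⟩
    · exact h.symm
    · exact absurd h2 hmem.1
  have hinj2 : Set.InjOn (fun y => ({y} : Set V)) Y := by
    intro y1 _ y2 _ he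
    simpa using he
  have hdisj : Disjoint (auxPart W Y g '' W) ((fun y => ({y} : Set V)) '' Y) := by
    rw [Set.disjoint_left]
    rintro S ⟨w, hw, rfl⟩ ⟨y, hy, he⟩
    have hwmem : w ∈ ((fun y => ({y} : Set V)) y) := by
      rw [he]; exact aux_self_mem_auxPart
    simp only [Set.mem_singleton_iff] at hwmem
    subst hwmem
    exact (hYD hy) hw
  rw [auxP, Set.ncard_union_eq hdisj (Set.toFinite _) (Set.toFinite _),
    Set.ncard_image_of_injOn hinj1, Set.ncard_image_of_injOn hinj2]

lemma aux_locating_of {P : Set (Set V)} (hG : G.Connected) (hP : Setoid.IsPartition P)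
    (h : ∀ S ∈ P, ∀ a ∈ S, ∀ b ∈ S, a ≠ b → ∃ T ∈ P, setDist G a T ≠ setDist G b T) :
    IsLocatingPartition G P := by
  refine ⟨hP, fun a b hab => ?_⟩
  by_contra hne
  obtain ⟨S, ⟨hS, haS⟩, -⟩ := hP.2 a
  have hSne : S.Nonempty := ⟨a, haS⟩
  have h0 : setDist G a S = 0 := (aux_setDist_eq_zero hG hSne).mpr haS
  have h0' : setDist G b S = 0 := by rw [← hab S hS]; exact h0
  have hbS : b ∈ S := (aux_setDist_eq_zero hG hSne).mp h0'
  obtain ⟨T, hT, hne'⟩ := h S hS a haS b hbS hne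
  exact hne' (hab T hT)

lemma aux_singleton_locating (hG : G.Connected) :
    IsLocatingPartition G (Set.range fun v => ({v} : Set V)) := by
  apply aux_locating_of hG
  · constructor
    · rintro ⟨v, hv⟩
      exact Set.notMem_empty v (by rw [← hv]; exact rfl)
    · intro a
      refine ⟨{a}, ⟨⟨a, rfl⟩, rfl⟩, ?_⟩
      rintro S ⟨⟨v, rfl⟩, haS⟩
      rw [Set.mem_singleton_iff] at haS
      subst haS
      rfl
  · rintro S ⟨v, rfl⟩ a ha b hb hne
    rw [Set.mem_singleton_iff] at ha hb
    exact absurd (ha.trans hb.symm) hne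

end Aux3

section Aux4
variable {V : Type*} {G : SimpleGraph V} {u v x y w w' u₀ a b : V} {S T W : Set V}
  {P : Set (Set V)}

lemma aux_partitionDim_le [Fintype V] (h : IsLocatingPartition G P) :
    partitionDim G ≤ P.ncard :=
  Nat.sInf_le ⟨P, h, rfl⟩

lemma aux_exists_locating_eq_dim [Fintype V] (hG : G.Connected) :
    ∃ P : Set (Set V), IsLocatingPartition G P ∧ P.ncard = partitionDim G := by
  have hne : {k | ∃ P : Set (Set V), IsLocatingPartition G P ∧ P.ncard = k}.Nonempty :=
    ⟨(Set.range fun v => ({v} : Set V)).ncard,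
      Set.range fun v => ({v} : Set V), aux_singleton_locating hG, rfl⟩
  exact Nat.sInf_mem hne

variable (hW : W = twinClass G u₀)

include hW in
lemma aux_lower_core (hG : G.Connected) (h : IsLocatingPartition G P) :
    ∃ f : V → Set V, (∀ a, f a ∈ P ∧ a ∈ f a) ∧
      (∀ a S, S ∈ P → a ∈ S → S = f a) ∧ Set.InjOn f W := by
  classical
  refine ⟨fun a => (h.1.2 a).choose, fun a => ?_, fun a S hS haS => ?_, ?_⟩
  · exact ((h.1.2 a).choose_spec).1
  · exact ((h.1.2 a).choose_spec).2 S ⟨hS, haS⟩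
  · intro w1 h1 w2 h2 he
    by_contra hne
    set f : V → Set V := fun a => (h.1.2 a).choose with hf
    have hmem : ∀ a, f a ∈ P ∧ a ∈ f a := fun a => ((h.1.2 a).choose_spec).1
    have huniq : ∀ a S, S ∈ P → a ∈ S → S = f a :=
      fun a S hS haS => ((h.1.2 a).choose_spec).2 S ⟨hS, haS⟩
    have htwin : IsTwin G w1 w2 := aux_W_twin hW h1 h2
    apply hne
    apply h.2
    intro T hT
    by_cases hTf : T = f w1
    · have e1 : setDist G w1 T = 0 :=
        (aux_setDist_eq_zero hG ⟨w1, hTf ▸ (hmem w1).2⟩).mpr (hTf ▸ (hmem w1).2)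
      have e2 : setDist G w2 T = 0 :=
        (aux_setDist_eq_zero hG ⟨w1, hTf ▸ (hmem w1).2⟩).mpr
          (by rw [hTf, he]; exact (hmem w2).2)
      rw [e1, e2]
    · have hw1T : w1 ∉ T := fun hc => hTf ((huniq w1 T hT hc).trans rfl)
      have hw2T : w2 ∉ T := fun hc => hTf (((huniq w2 T hT hc).trans rfl).trans he.symm)
      apply aux_setDist_congr
      intro z hz
      have hz1 : z ≠ w1 := fun hc => hw1T (hc ▸ hz)
      have hz2 : z ≠ w2 := fun hc => hw2T (hc ▸ hz)
      calc G.dist w1 z = G.dist z w1 := SimpleGraph.dist_comm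
        _ = G.dist z w2 := aux_twin_dist hG htwin hz1 hz2
        _ = G.dist w2 z := SimpleGraph.dist_comm

include hW in
lemma aux_W_ncard_le [Fintype V] (hG : G.Connected) (h : IsLocatingPartition G P) :
    W.ncard ≤ P.ncard := by
  obtain ⟨f, hmem, _, hinj⟩ := aux_lower_core hW hG h
  calc W.ncard = (f '' W).ncard := (Set.ncard_image_of_injOn hinj).symm
    _ ≤ P.ncard := Set.ncard_le_ncard (by rintro S ⟨a, ha, rfl⟩; exact (hmem a).1)
      (Set.toFinite P)

include hW in
lemma aux_complete_lower [Fintype V] (hG : G.Connected)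
    (hcomp : ∀ a ∈ W, ∀ b ∈ W, a ≠ b → G.Adj a b) (hD : ∃ z, z ∉ W)
    (h : IsLocatingPartition G P) : P.ncard ≠ W.ncard := by
  intro hcard
  obtain ⟨f, hmem, huniq, hinj⟩ := aux_lower_core hW hG h
  have hsub : f '' W ⊆ P := by rintro S ⟨a, ha, rfl⟩; exact (hmem a).1
  have heq : f '' W = P := Set.eq_of_subset_of_ncard_le hsub
    (by rw [Set.ncard_image_of_injOn hinj, hcard]) (Set.toFinite P)
  obtain ⟨x, hxW, hxadj⟩ := aux_L1_nonempty hW hG hD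
  have hfx : f x ∈ P := (hmem x).1
  rw [← heq] at hfx
  obtain ⟨w₀, hw₀, hfw₀⟩ := hfx
  have hw₀S : w₀ ∈ f x := hfw₀ ▸ (hmem w₀).2
  have : x = w₀ := by
    apply h.2
    intro T hT
    obtain ⟨w₁, hw₁, hfw₁⟩ := heq ▸ hT
    by_cases hTS : T = f x
    · have hne : (T : Set V).Nonempty := ⟨x, hTS ▸ (hmem x).2⟩
      rw [(aux_setDist_eq_zero hG hne).mpr (hTS ▸ (hmem x).2),
        (aux_setDist_eq_zero hG hne).mpr (hTS ▸ hw₀S)]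
    · have hxT : x ∉ T := fun hc => hTS ((huniq x T hT hc).trans rfl)
      have hw₀T : w₀ ∉ T := fun hc => hTS (((huniq w₀ T hT hc).trans rfl).trans hfw₀)
      have hw₁T : w₁ ∈ T := hfw₁ ▸ (hmem w₁).2
      have hTne : (T : Set V).Nonempty := ⟨w₁, hw₁T⟩
      have hw₁x : w₁ ≠ x := fun hc => hxT (hc ▸ hw₁T)
      have hw₁w₀ : w₁ ≠ w₀ := fun hc => hw₀T (hc ▸ hw₁T)
      have e1 : setDist G x T = 1 := by
        have hle : setDist G x T ≤ 1 := by
          have : G.dist x w₁ = 1 :=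
            SimpleGraph.dist_eq_one_iff_adj.mpr (aux_L1_adj_all hW hxW hxadj hw₁)
          exact this ▸ aux_setDist_le hw₁T
        have := aux_setDist_pos hG hTne hxT
        omega
      have e2 : setDist G w₀ T = 1 := by
        have hle : setDist G w₀ T ≤ 1 := by
          have : G.dist w₀ w₁ = 1 :=
            SimpleGraph.dist_eq_one_iff_adj.mpr ((hcomp w₁ hw₁ w₀ hw₀ hw₁w₀).symm)
          exact this ▸ aux_setDist_le hw₁T
        have := aux_setDist_pos hG hTne hw₀T
        omega
      rw [e1, e2]
  exact hxW (this ▸ hw₀)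

include hW in
lemma aux_W_ne_univ (hG : G.Connected)
    (hnotcomplete : ¬ Nonempty (G ≃g (⊤ : SimpleGraph V))) : W ≠ Set.univ := by
  intro huniv
  rcases aux_W_dichotomy hW with hind | hcomp
  · -- G has no edges at all; then all vertices are equal, and G ≃ ⊤ trivially
    have hnoadj : ∀ a b : V, ¬ G.Adj a b := fun a b =>
      hind a (huniv ▸ Set.mem_univ a) b (huniv ▸ Set.mem_univ b)
    have hall : ∀ a b : V, a = b := by
      intro a b
      obtain ⟨p, -⟩ := (hG a b).exists_walk_length_eq_dist
      cases p with
      | nil => rfl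
      | @cons _ y _ hadj q => exact absurd hadj (hnoadj a y)
    exact hnotcomplete ⟨⟨Equiv.refl V, by
      intro a b
      have hab : a = b := hall a b
      subst hab
      simp⟩⟩
  · exact hnotcomplete ⟨⟨Equiv.refl V, by
      intro a b
      simp only [Equiv.refl_apply, SimpleGraph.top_adj]
      constructor
      · exact fun hne => hcomp a (huniv ▸ Set.mem_univ a) b (huniv ▸ Set.mem_univ b) hne
      · exact fun hadj => hadj.ne⟩⟩

end Aux4

section Aux5
variable {V : Type*} {G : SimpleGraph V} {u v x y w w' u₀ a b t w₀ : V} {S T W Y : Set V}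
  {g : V → V}

lemma aux_setDist_eq_one' (hG : G.Connected) (hu : u ∉ T) (ht : t ∈ T)
    (h1 : G.dist u t = 1) : setDist G u T = 1 := by
  have hle := aux_setDist_le (G := G) (u := u) ht
  rw [h1] at hle
  have := aux_setDist_pos hG ⟨t, ht⟩ hu
  omega

lemma aux_setDist_eq_two' (hG : G.Connected) (hu : u ∉ T) (ht : t ∈ T)
    (h2 : G.dist u t = 2) (hnadj : ∀ s ∈ T, ¬ G.Adj u s) : setDist G u T = 2 := by
  have hle := aux_setDist_le (G := G) (u := u) ht
  rw [h2] at hle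
  have := aux_two_le_setDist hG ⟨t, ht⟩ hu hnadj
  omega

lemma aux_part_eq_pair (hx : x ∈ Wᶜ \ Y) (hinj : Set.InjOn g (Wᶜ \ Y)) :
    auxPart W Y g (g x) = {g x, x} := by
  ext t
  rw [aux_mem_auxPart]
  constructor
  · rintro (rfl | ⟨ht, hgt⟩)
    · exact Set.mem_insert _ _
    · exact Set.mem_insert_iff.mpr (Or.inr (by rw [Set.mem_singleton_iff]; exact hinj ht hx hgt))
  · rintro (rfl | ht)
    · exact Or.inl rfl
    · rw [Set.mem_singleton_iff] at ht
      subst ht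
      exact Or.inr ⟨hx, rfl⟩

lemma aux_part_eq_singleton (hw₀ : ∀ z ∈ Wᶜ \ Y, g z ≠ w₀) :
    auxPart W Y g w₀ = {w₀} := by
  ext t
  rw [aux_mem_auxPart]
  constructor
  · rintro (rfl | ⟨ht, hgt⟩)
    · rfl
    · exact absurd hgt (hw₀ t ht)
  · rintro rfl
    exact Or.inl rfl

variable (hW : W = twinClass G u₀)

include hW in
lemma aux_adj_of_adj_mem (hx : x ∉ W) (hy : y ∈ W) (h : G.Adj x y) : G.Adj x u₀ := by
  by_cases hyu : y = u₀
  · exact hyu ▸ h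
  · have hmem : x ∈ G.neighborSet y \ {u₀} := ⟨h.symm, fun hc => hx (by
      rw [Set.mem_singleton_iff] at hc; rw [hc]; exact aux_u₀_mem_W hW)⟩
    rw [← aux_mem_W_twin hW hy] at hmem
    exact hmem.1.symm

end Aux5

section Aux6
variable {V : Type*} {G : SimpleGraph V} {u₀ : V} {W : Set V}

lemma aux_caseA [Fintype V] (hG : G.Connected) (hW : W = twinClass G u₀)
    (hind : ∀ a ∈ W, ∀ b ∈ W, ¬ G.Adj a b) (hDne : ∃ z, z ∉ W)
    (hm : Wᶜ.ncard < W.ncard) :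
    ∃ P : Set (Set V), IsLocatingPartition G P ∧ P.ncard = W.ncard := by
  classical
  -- get the injection pairing outside vertices with twins
  have hc : Fintype.card ↥(Wᶜ) ≤ Fintype.card ↥W := by
    rw [← Nat.card_eq_fintype_card, ← Nat.card_eq_fintype_card,
      Nat.card_coe_set_eq, Nat.card_coe_set_eq]
    exact hm.le
  obtain ⟨e⟩ := Function.Embedding.nonempty_of_card_le hc
  set g : V → V := fun x => if h : x ∈ Wᶜ then (e ⟨x, h⟩ : V) else u₀ with hg
  have hgW : ∀ x ∈ Wᶜ, g x ∈ W := by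
    intro x hx
    simp only [hg, dif_pos hx]
    exact (e ⟨x, hx⟩).2
  have hginj : Set.InjOn g Wᶜ := by
    intro x1 h1 x2 h2 he
    simp only [hg, dif_pos h1, dif_pos h2] at he
    have := e.injective (Subtype.coe_injective he)
    exact congrArg Subtype.val this
  have hnsub : ¬ W ⊆ g '' Wᶜ := by
    intro hsub
    have h1 := Set.ncard_le_ncard hsub (Set.toFinite _)
    rw [Set.ncard_image_of_injOn hginj] at h1
    omega
  obtain ⟨w₀, hw₀W, hw₀img⟩ := Set.not_subset.mp hnsub
  -- distance between distinct twins is 2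
  obtain ⟨x₁, hx₁W, hx₁adj⟩ := aux_L1_nonempty hW hG hDne
  have hdistW2 : ∀ w ∈ W, ∀ w' ∈ W, w ≠ w' → G.dist w w' = 2 := by
    intro w hw w' hw' hne
    have h1 : G.dist w x₁ = 1 :=
      SimpleGraph.dist_eq_one_iff_adj.mpr (aux_L1_adj_all hW hx₁W hx₁adj hw).symm
    have h2 : G.dist x₁ w' = 1 :=
      SimpleGraph.dist_eq_one_iff_adj.mpr (aux_L1_adj_all hW hx₁W hx₁adj hw')
    have hle : G.dist w w' ≤ G.dist w x₁ + G.dist x₁ w' := hG.dist_triangle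
    have h0 : G.dist w w' ≠ 0 := fun h => hne (hG.dist_eq_zero_iff.mp h)
    have hne1 : G.dist w w' ≠ 1 := fun h =>
      hind w hw w' hw' (SimpleGraph.dist_eq_one_iff_adj.mp h)
    omega
  -- facts about membership in `Wᶜ \ ∅`
  have hmemD : ∀ x, x ∉ W → x ∈ Wᶜ \ (∅ : Set V) := fun x hx => ⟨hx, Set.notMem_empty x⟩
  have hginj' : Set.InjOn g (Wᶜ \ (∅ : Set V)) := by rw [Set.diff_empty]; exact hginj
  have hgW' : ∀ x ∈ Wᶜ \ (∅ : Set V), g x ∈ W := by rw [Set.diff_empty]; exact hgW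
  have hw₀img' : ∀ z ∈ Wᶜ \ (∅ : Set V), g z ≠ w₀ := by
    intro z hz he
    exact hw₀img ⟨z, hz.1, he⟩
  -- the partition
  refine ⟨auxP W (∅ : Set V) g, ?_, ?_⟩
  swap
  · rw [aux_auxP_ncard (by simp)]
    simp
  -- the key witness: x outside W is distinguished from g x
  have witness : ∀ x, x ∉ W →
      ∃ T ∈ auxP W (∅ : Set V) g, setDist G x T ≠ setDist G (g x) T := by
    intro x hxW
    have hxu₀ : x ≠ u₀ := fun h => hxW (h ▸ aux_u₀_mem_W hW)
    have hρpos : 0 < G.dist x u₀ := hG.pos_dist_of_ne hxu₀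
    have hgxW : g x ∈ W := hgW x hxW
    have hxgx : x ≠ g x := fun h => hxW (h ▸ hgxW)
    by_cases hρ1 : G.dist x u₀ = 1
    · -- use the unpaired singleton part {w₀}
      have hadjx : G.Adj x u₀ := SimpleGraph.dist_eq_one_iff_adj.mp hρ1
      refine ⟨auxPart W (∅ : Set V) g w₀, aux_part_mem hw₀W, ?_⟩
      rw [aux_part_eq_singleton hw₀img', aux_setDist_singleton, aux_setDist_singleton]
      have e1 : G.dist x w₀ = 1 := by rw [aux_dist_to_W hW hG hxW hw₀W]; exact hρ1
      have e2 : G.dist (g x) w₀ = 2 :=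
        hdistW2 _ hgxW _ hw₀W (fun h => hw₀img ⟨x, hxW, h⟩)
      omega
    by_cases hρ2 : G.dist x u₀ = 2
    · -- find a distinguishing witness y outside W
      have hwit : ∃ y, y ∉ W ∧ y ≠ x ∧ ¬ (G.Adj x y ↔ G.dist y u₀ = 1) := by
        by_contra hcon
        push_neg at hcon
        have htwin : IsTwin G u₀ x := by
          apply aux_isTwin_of_adj_iff
          intro z hzu hzx
          constructor
          · intro hadj
            have hzW : z ∉ W := fun hzW =>
              hind u₀ (aux_u₀_mem_W hW) z hzW hadj
            have hz1 : G.dist z u₀ = 1 := SimpleGraph.dist_eq_one_iff_adj.mpr hadj.symm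
            exact (hcon z hzW hzx).mpr hz1
          · intro hadj
            have hzW : z ∉ W := by
              intro hzW
              have hxu : G.Adj x u₀ := aux_adj_of_adj_mem hW hxW hzW hadj
              have h1 : G.dist x u₀ = 1 := SimpleGraph.dist_eq_one_iff_adj.mpr hxu
              omega
            have hd1 := (hcon z hzW hzx).mp hadj
            exact (SimpleGraph.dist_eq_one_iff_adj.mp hd1).symm
        exact hxW (by rw [hW]; exact htwin)
      obtain ⟨y, hyW, hyx, hxor⟩ := hwit
      have hyD := hmemD y hyW
      have hgyW : g y ∈ W := hgW y hyW
      refine ⟨auxPart W (∅ : Set V) g (g y), aux_part_mem hgyW, ?_⟩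
      rw [aux_part_eq_pair hyD hginj']
      have hgxgy : g x ≠ g y := fun h => hyx (hginj hxW hyW h).symm
      have hxny : x ∉ ({g y, y} : Set V) := by
        simp only [Set.mem_insert_iff, Set.mem_singleton_iff]
        push_neg
        exact ⟨fun h => hxW (h ▸ hgyW), fun h => hyx h.symm⟩
      have hgxny : g x ∉ ({g y, y} : Set V) := by
        simp only [Set.mem_insert_iff, Set.mem_singleton_iff]
        push_neg
        exact ⟨hgxgy, fun h => hyW (h ▸ hgxW)⟩
      have hymem : y ∈ ({g y, y} : Set V) := by simp
      have hgymem : g y ∈ ({g y, y} : Set V) := by simp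
      by_cases hxy : G.Adj x y
      · -- then dist y u₀ ≠ 1, i.e. ≥ 2
        have hy1 : G.dist y u₀ ≠ 1 := fun h => hxor (iff_of_true hxy h)
        have hypos : 0 < G.dist y u₀ :=
          hG.pos_dist_of_ne (fun h => hyW (h ▸ aux_u₀_mem_W hW))
        have e1 : setDist G x {g y, y} = 1 :=
          aux_setDist_eq_one' hG hxny hymem (SimpleGraph.dist_eq_one_iff_adj.mpr hxy)
        have e2 : setDist G (g x) {g y, y} = 2 := by
          apply aux_setDist_eq_two' hG hgxny hgymem (hdistW2 _ hgxW _ hgyW hgxgy)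
          intro s hs
          rcases Set.mem_insert_iff.mp hs with rfl | hs
          · exact hind _ hgxW _ hgyW
          · rw [Set.mem_singleton_iff] at hs
            subst hs
            intro hadj
            have : G.dist s (g x) = 1 := SimpleGraph.dist_eq_one_iff_adj.mpr hadj.symm
            rw [aux_dist_to_W hW hG hyW hgxW] at this
            exact hy1 this
        omega
      · -- then dist y u₀ = 1
        have hy1 : G.dist y u₀ = 1 := by
          by_contra h
          exact hxor (iff_of_false hxy h)
        have e1 : setDist G (g x) {g y, y} = 1 := by
          apply aux_setDist_eq_one' hG hgxny hymem
          rw [SimpleGraph.dist_comm, aux_dist_to_W hW hG hyW hgxW]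
          exact hy1
        have e2 : setDist G x {g y, y} = 2 := by
          apply aux_setDist_eq_two' hG hxny hgymem
          · rw [aux_dist_to_W hW hG hxW hgyW]; exact hρ2
          · intro s hs
            rcases Set.mem_insert_iff.mp hs with rfl | hs
            · intro hadj
              have hd1 : G.dist x (g y) = 1 := SimpleGraph.dist_eq_one_iff_adj.mpr hadj
              rw [aux_dist_to_W hW hG hxW hgyW] at hd1
              omega
            · rw [Set.mem_singleton_iff] at hs
              subst hs
              exact hxy
        omega
    · -- dist x u₀ ≥ 3 : use the parent of x on a shortest path
      have hρ3 : 3 ≤ G.dist x u₀ := by omega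
      obtain ⟨p, hp⟩ := (hG x u₀).exists_walk_length_eq_dist
      cases p with
      | nil => rw [← hp] at hρpos; simp at hρpos
      | @cons _ y _ hadj q =>
        have hq : q.length + 1 = G.dist x u₀ := by simpa using hp
        have hdy_le : G.dist y u₀ ≤ q.length := G.dist_le q
        have hxy1 : G.dist x y = 1 := SimpleGraph.dist_eq_one_iff_adj.mpr hadj
        have htri : G.dist x u₀ ≤ G.dist x y + G.dist y u₀ := hG.dist_triangle
        have hdy : G.dist y u₀ = G.dist x u₀ - 1 := by omega
        have hyW : y ∉ W := by
          intro hyWmem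
          have := aux_adj_of_adj_mem hW hxW hyWmem hadj
          have : G.dist x u₀ = 1 := SimpleGraph.dist_eq_one_iff_adj.mpr this
          omega
        have hyx : y ≠ x := by
          intro h
          rw [h] at hdy
          omega
        have hyD := hmemD y hyW
        have hgyW : g y ∈ W := hgW y hyW
        refine ⟨auxPart W (∅ : Set V) g (g y), aux_part_mem hgyW, ?_⟩
        rw [aux_part_eq_pair hyD hginj']
        have hgxgy : g x ≠ g y := fun h => hyx (hginj hxW hyW h).symm
        have hxny : x ∉ ({g y, y} : Set V) := by
          simp only [Set.mem_insert_iff, Set.mem_singleton_iff]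
          push_neg
          exact ⟨fun h => hxW (h ▸ hgyW), fun h => hyx h.symm⟩
        have hgxny : g x ∉ ({g y, y} : Set V) := by
          simp only [Set.mem_insert_iff, Set.mem_singleton_iff]
          push_neg
          exact ⟨hgxgy, fun h => hyW (h ▸ hgxW)⟩
        have e1 : setDist G x {g y, y} = 1 :=
          aux_setDist_eq_one' hG hxny (by simp) hxy1
        have e2 : setDist G (g x) {g y, y} = 2 := by
          apply aux_setDist_eq_two' hG hgxny (by simp : g y ∈ ({g y, y} : Set V))
            (hdistW2 _ hgxW _ hgyW hgxgy)
          intro s hs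
          rcases Set.mem_insert_iff.mp hs with rfl | hs
          · exact hind _ hgxW _ hgyW
          · rw [Set.mem_singleton_iff] at hs
            subst hs
            intro hadj
            have h1 : G.dist s (g x) = 1 := SimpleGraph.dist_eq_one_iff_adj.mpr hadj.symm
            rw [aux_dist_to_W hW hG hyW hgxW] at h1
            omega
        omega
  -- assemble: within-part resolution
  apply aux_locating_of hG (aux_auxP_isPartition (by simp) hgW')
  intro S hS a haS b hbS hab
  rcases aux_part_unique_form hS with ⟨w, hwW, rfl⟩ | ⟨y, hy, rfl⟩
  · rcases aux_mem_auxPart.mp haS with rfl | ⟨haD, hga⟩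
    · rcases aux_mem_auxPart.mp hbS with rfl | ⟨hbD, hgb⟩
      · exact absurd rfl hab
      · obtain ⟨T, hT, hne⟩ := witness b hbD.1
        exact ⟨T, hT, by rw [← hgb]; exact hne.symm⟩
    · rcases aux_mem_auxPart.mp hbS with rfl | ⟨hbD, hgb⟩
      · obtain ⟨T, hT, hne⟩ := witness a haD.1
        exact ⟨T, hT, by rw [← hga]; exact hne⟩
      · exact absurd (hginj' haD hbD (hga.trans hgb.symm)) hab
  · exact absurd hy (Set.notMem_empty y)

end Aux6

section Aux7

lemma aux_ore {α : Type*} [DecidableEq α] (U : Finset α) (R : α → α → Prop)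
    (hsymm : ∀ a b, R a b → R b a)
    (h : ∀ u ∈ U, ∃ v ∈ U, v ≠ u ∧ R u v) :
    ∃ Y : Finset α, Y ⊆ U ∧ 2 * Y.card ≤ U.card ∧
      ∀ u ∈ U, u ∉ Y → ∃ y ∈ Y, R u y := by
  classical
  have hne : {n | ∃ Z : Finset α, (Z ⊆ U ∧ ∀ u ∈ U, u ∉ Z → ∃ y ∈ Z, R u y) ∧
      Z.card = n}.Nonempty :=
    ⟨U.card, U, ⟨Finset.Subset.refl U, fun u hu hu' => absurd hu hu'⟩, rfl⟩
  obtain ⟨Z, ⟨hZU, hZdom⟩, hZcard⟩ := Nat.sInf_mem hne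
  have hmin : ∀ Z' : Finset α, Z' ⊆ U → (∀ u ∈ U, u ∉ Z' → ∃ y ∈ Z', R u y) →
      Z.card ≤ Z'.card := by
    intro Z' h1 h2
    rw [hZcard]
    exact Nat.sInf_le ⟨Z', ⟨h1, h2⟩, rfl⟩
  by_cases hc : 2 * Z.card ≤ U.card
  · exact ⟨Z, hZU, hc, hZdom⟩
  · refine ⟨U \ Z, Finset.sdiff_subset, ?_, ?_⟩
    · have h1 : (U \ Z).card = U.card - Z.card := Finset.card_sdiff_of_subset hZU
      have h2 : Z.card ≤ U.card := Finset.card_le_card hZU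
      omega
    · intro u huU huY
      have huZ : u ∈ Z := by
        by_contra h'
        exact huY (Finset.mem_sdiff.mpr ⟨huU, h'⟩)
      by_contra hno
      push_neg at hno
      have hpart : ∀ v ∈ U, R u v → v ∈ Z := by
        intro v hv hRv
        by_contra h'
        exact hno v (Finset.mem_sdiff.mpr ⟨hv, h'⟩) hRv
      have hdom' : ∀ a ∈ U, a ∉ Z.erase u → ∃ y ∈ Z.erase u, R a y := by
        intro a haU haZ'
        by_cases hau : a = u
        · subst hau
          obtain ⟨v, hvU, hvne, hRv⟩ := h a haU
          exact ⟨v, Finset.mem_erase.mpr ⟨hvne, hpart v hvU hRv⟩, hRv⟩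
        · have haZ : a ∉ Z := fun hc' => haZ' (Finset.mem_erase.mpr ⟨hau, hc'⟩)
          obtain ⟨y, hyZ, hRy⟩ := hZdom a haU haZ
          have hyu : y ≠ u := by
            intro h'
            subst h'
            exact haZ (hpart a haU (hsymm a y hRy))
          exact ⟨y, Finset.mem_erase.mpr ⟨hyu, hyZ⟩, hRy⟩
      have hlt : (Z.erase u).card < Z.card := Finset.card_erase_lt_of_mem huZ
      have := hmin _ ((Finset.erase_subset u Z).trans hZU) hdom'
      omega

end Aux7

section Aux8
variable {V : Type*} {G : SimpleGraph V} {u₀ : V} {W : Set V}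

lemma aux_caseB [Fintype V] (hG : G.Connected) (hW : W = twinClass G u₀)
    (hcomp : ∀ a ∈ W, ∀ b ∈ W, a ≠ b → G.Adj a b) (hDne : ∃ z, z ∉ W)
    (hm : Wᶜ.ncard < W.ncard) :
    ∃ P : Set (Set V), IsLocatingPartition G P ∧
      2 * P.ncard ≤ 2 * W.ncard + Wᶜ.ncard := by
  classical
  set L1 : Set V := {x | x ∉ W ∧ G.dist x u₀ = 1} with hL1def
  set L2 : Set V := {y | y ∉ W ∧ G.dist y u₀ = 2 ∧ ∃ x ∈ L1, G.Adj x y} with hL2def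
  set U : Finset V := (Set.toFinite (L1 ∪ L2)).toFinset with hUdef
  have hmemU : ∀ z, z ∈ U ↔ z ∈ L1 ∪ L2 := fun z => Set.Finite.mem_toFinset _
  set R : V → V → Prop := fun a b => a ≠ b ∧
    ((a ∈ L1 ∧ b ∈ L1 ∧ ¬ G.Adj a b) ∨ (a ∈ L1 ∧ b ∈ L2 ∧ G.Adj a b) ∨
      (a ∈ L2 ∧ b ∈ L1 ∧ G.Adj a b)) with hRdef
  have hsymm : ∀ a b, R a b → R b a := by
    rintro a b ⟨hne, h⟩
    refine ⟨hne.symm, ?_⟩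
    rcases h with ⟨h1, h2, h3⟩ | ⟨h1, h2, h3⟩ | ⟨h1, h2, h3⟩
    · exact Or.inl ⟨h2, h1, fun h' => h3 h'.symm⟩
    · exact Or.inr (Or.inr ⟨h2, h1, h3.symm⟩)
    · exact Or.inr (Or.inl ⟨h2, h1, h3.symm⟩)
  have hpartner : ∀ u ∈ U, ∃ v ∈ U, v ≠ u ∧ R u v := by
    intro u hu
    rw [hmemU] at hu
    rcases hu with hu | hu
    · -- u ∈ L1
      have hadj_u : G.Adj u u₀ := SimpleGraph.dist_eq_one_iff_adj.mp hu.2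
      have claim : ∃ v, (v ∈ L1 ∧ v ≠ u ∧ ¬ G.Adj u v) ∨ (v ∈ L2 ∧ G.Adj u v) := by
        by_contra hcon
        push_neg at hcon
        have htwin : IsTwin G u₀ u := by
          apply aux_isTwin_of_adj_iff
          intro z hz1 hz2
          constructor
          · intro hadj
            by_cases hzW : z ∈ W
            · exact aux_L1_adj_all hW hu.1 hadj_u hzW
            · have hzL1 : z ∈ L1 := ⟨hzW, SimpleGraph.dist_eq_one_iff_adj.mpr hadj.symm⟩
              exact (hcon z).1 hzL1 hz2
          · intro hadj
            by_cases hzW : z ∈ W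
            · exact hcomp u₀ (aux_u₀_mem_W hW) z hzW (fun h => hz1 h.symm)
            · have htri : G.dist z u₀ ≤ G.dist z u + G.dist u u₀ := hG.dist_triangle
              have hzu : G.dist z u = 1 := SimpleGraph.dist_eq_one_iff_adj.mpr hadj.symm
              have h0 : G.dist z u₀ ≠ 0 := fun h => hz1 (hG.dist_eq_zero_iff.mp h)
              by_cases hd1 : G.dist z u₀ = 1
              · exact (SimpleGraph.dist_eq_one_iff_adj.mp hd1).symm
              · have hu1 : G.dist u u₀ = 1 := hu.2
                have hd2 : G.dist z u₀ = 2 := by omega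
                have hzL2 : z ∈ L2 := ⟨hzW, hd2, ⟨u, hu, hadj⟩⟩
                exact absurd hadj ((hcon z).2 hzL2)
        exact absurd (by rw [hW]; exact htwin) hu.1
      obtain ⟨v, hv⟩ := claim
      rcases hv with ⟨hv1, hvne, hnadj⟩ | ⟨hv2, hadj⟩
      · exact ⟨v, (hmemU v).mpr (Or.inl hv1), hvne, hvne.symm, Or.inl ⟨hu, hv1, hnadj⟩⟩
      · exact ⟨v, (hmemU v).mpr (Or.inr hv2), hadj.ne', hadj.ne,
          Or.inr (Or.inl ⟨hu, hv2, hadj⟩)⟩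
    · -- u ∈ L2
      obtain ⟨x, hx, hadj⟩ := hu.2.2
      exact ⟨x, (hmemU x).mpr (Or.inl hx), hadj.ne, hadj.ne.symm,
        Or.inr (Or.inr ⟨hu, hx, hadj.symm⟩)⟩
  obtain ⟨Yf, hYfU, hYfcard, hYfdom⟩ := aux_ore U R hsymm hpartner
  set Y : Set V := (↑Yf : Set V) with hYdef
  have hYD : Y ⊆ Wᶜ := by
    intro y hy
    have := (hmemU y).mp (hYfU hy)
    rcases this with h | h
    · exact h.1
    · exact h.1
  -- build the injection from Wᶜ \ Y into W
  have hc : Fintype.card ↥(Wᶜ \ Y) ≤ Fintype.card ↥W := by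
    rw [← Nat.card_eq_fintype_card, ← Nat.card_eq_fintype_card,
      Nat.card_coe_set_eq, Nat.card_coe_set_eq]
    have := Set.ncard_le_ncard (Set.diff_subset (s := Wᶜ) (t := Y)) (Set.toFinite _)
    omega
  obtain ⟨e⟩ := Function.Embedding.nonempty_of_card_le hc
  set g : V → V := fun x => if h : x ∈ Wᶜ \ Y then (e ⟨x, h⟩ : V) else u₀ with hgdef
  have hgW : ∀ x ∈ Wᶜ \ Y, g x ∈ W := by
    intro x hx
    simp only [hgdef, dif_pos hx]
    exact (e ⟨x, hx⟩).2
  have hginj : Set.InjOn g (Wᶜ \ Y) := by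
    intro x1 h1 x2 h2 he
    simp only [hgdef, dif_pos h1, dif_pos h2] at he
    exact congrArg Subtype.val (e.injective (Subtype.coe_injective he))
  have hnsub : ¬ W ⊆ g '' (Wᶜ \ Y) := by
    intro hsub
    have h1 := Set.ncard_le_ncard hsub (Set.toFinite _)
    rw [Set.ncard_image_of_injOn hginj] at h1
    have h2 := Set.ncard_le_ncard (Set.diff_subset (s := Wᶜ) (t := Y)) (Set.toFinite _)
    omega
  obtain ⟨w₀, hw₀W, hw₀img⟩ := Set.not_subset.mp hnsub
  have hw₀img' : ∀ z ∈ Wᶜ \ Y, g z ≠ w₀ := fun z hz he => hw₀img ⟨z, hz, he⟩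
  refine ⟨auxP W Y g, ?_, ?_⟩
  swap
  · rw [aux_auxP_ncard hYD]
    have h1 : Y.ncard = Yf.card := Set.ncard_coe_finset Yf
    have h2 : U.card = (L1 ∪ L2).ncard := (Set.ncard_eq_toFinset_card _ _).symm
    have h3 : (L1 ∪ L2).ncard ≤ Wᶜ.ncard := by
      apply Set.ncard_le_ncard _ (Set.toFinite _)
      rintro z (hz | hz)
      · exact hz.1
      · exact hz.1
    omega
  -- locating
  have witness : ∀ x ∈ Wᶜ \ Y,
      ∃ T ∈ auxP W Y g, setDist G x T ≠ setDist G (g x) T := by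
    intro x hx
    have hxW : x ∉ W := hx.1
    have hxu₀ : x ≠ u₀ := fun h => hxW (h ▸ aux_u₀_mem_W hW)
    have hρpos : 0 < G.dist x u₀ := hG.pos_dist_of_ne hxu₀
    have hgxW : g x ∈ W := hgW x hx
    by_cases hρ1 : G.dist x u₀ = 1
    · -- x ∈ L1 : use the covering singleton
      have hxL1 : x ∈ L1 := ⟨hxW, hρ1⟩
      have hxU : x ∈ U := (hmemU x).mpr (Or.inl hxL1)
      have hxYf : x ∉ Yf := fun h => hx.2 h
      obtain ⟨y, hyYf, hRxy⟩ := hYfdom x hxU hxYf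
      have hyY : y ∈ Y := hyYf
      refine ⟨{y}, aux_single_mem hyY, ?_⟩
      rw [aux_setDist_singleton, aux_setDist_singleton]
      have hyW : y ∉ W := hYD hyY
      have hgxy : G.dist (g x) y = G.dist y u₀ := by
        rw [SimpleGraph.dist_comm]
        exact aux_dist_to_W hW hG hyW hgxW
      rcases hRxy.2 with ⟨_, hyL1, hnadj⟩ | ⟨_, hyL2, hadj⟩ | ⟨hxL2, _, _⟩
      · -- y ∈ L1 and not adjacent: dist x y = 2 vs dist (g x) y = 1
        have hd1 : G.dist x y ≤ G.dist x u₀ + G.dist u₀ y := hG.dist_triangle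
        have hd2 : G.dist u₀ y = 1 := by rw [SimpleGraph.dist_comm]; exact hyL1.2
        have h0 : G.dist x y ≠ 0 := fun h => hRxy.1 (hG.dist_eq_zero_iff.mp h)
        have h1 : G.dist x y ≠ 1 := fun h => hnadj (SimpleGraph.dist_eq_one_iff_adj.mp h)
        rw [hgxy, hyL1.2]
        omega
      · -- y ∈ L2 and adjacent: dist x y = 1 vs 2
        have h1 : G.dist x y = 1 := SimpleGraph.dist_eq_one_iff_adj.mpr hadj
        rw [h1, hgxy, hyL2.2.1]
        omega
      · exact absurd hρ1 (by rw [hxL2.2.1]; omega)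
    · -- dist x u₀ ≥ 2 : use the unpaired singleton {w₀}
      refine ⟨auxPart W Y g w₀, aux_part_mem hw₀W, ?_⟩
      rw [aux_part_eq_singleton hw₀img', aux_setDist_singleton, aux_setDist_singleton]
      have e1 : G.dist x w₀ = G.dist x u₀ := aux_dist_to_W hW hG hxW hw₀W
      have e2 : G.dist (g x) w₀ = 1 := SimpleGraph.dist_eq_one_iff_adj.mpr
        (hcomp _ hgxW _ hw₀W (fun h => hw₀img ⟨x, hx, h⟩))
      omega
  apply aux_locating_of hG (aux_auxP_isPartition hYD hgW)
  intro S hS a haS b hbS hab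
  rcases aux_part_unique_form hS with ⟨w, hwW, rfl⟩ | ⟨y, hy, rfl⟩
  · rcases aux_mem_auxPart.mp haS with rfl | ⟨haD, hga⟩
    · rcases aux_mem_auxPart.mp hbS with rfl | ⟨hbD, hgb⟩
      · exact absurd rfl hab
      · obtain ⟨T, hT, hne⟩ := witness b hbD
        exact ⟨T, hT, by rw [← hgb]; exact hne.symm⟩
    · rcases aux_mem_auxPart.mp hbS with rfl | ⟨hbD, hgb⟩
      · obtain ⟨T, hT, hne⟩ := witness a haD
        exact ⟨T, hT, by rw [← hga]; exact hne⟩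
      · exact absurd (hginj haD hbD (hga.trans hgb.symm)) hab
  · rw [Set.mem_singleton_iff] at haS hbS
    exact absurd (haS.trans hbS.symm) hab

end Aux8

/-- For a connected graph `G` of order `n`, not complete, with `2·τ(G) > n` and
`W` its twin class of maximum cardinality: `τ(G) ≤ β_p(G) ≤ (n + τ(G))/2`;
moreover `β_p(G) = τ(G)` iff `W` induces an edgeless subgraph, and
`τ(G) < β_p(G)` iff `W` induces a complete subgraph. -/
theorem twinNumber_vs_partitionDim {V : Type*} [Fintype V]
    (G : SimpleGraph V) (hG : G.Connected) (n : ℕ) (hn : Fintype.card V = n)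
    (hnotcomplete : ¬ Nonempty (G ≃g (⊤ : SimpleGraph V)))
    (hτ : n < 2 * twinNumber G)
    (W : Set V) (hW : ∃ u : V, W = twinClass G u)
    (hWcard : W.ncard = twinNumber G) :
    twinNumber G ≤ partitionDim G ∧ 2 * partitionDim G ≤ n + twinNumber G ∧
      (partitionDim G = twinNumber G ↔ ∀ u ∈ W, ∀ v ∈ W, ¬ G.Adj u v) ∧
      (twinNumber G < partitionDim G ↔ ∀ u ∈ W, ∀ v ∈ W, u ≠ v → G.Adj u v) := by
  classical
  obtain ⟨u₀, hWu⟩ := hW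
  rw [← hWcard] at hτ ⊢
  have hWne : W ≠ Set.univ := aux_W_ne_univ hWu hG hnotcomplete
  have hDne : ∃ z, z ∉ W := by
    by_contra h
    push_neg at h
    exact hWne (Set.eq_univ_of_forall h)
  have hsum : W.ncard + Wᶜ.ncard = n := by
    rw [Set.ncard_add_ncard_compl W, Nat.card_eq_fintype_card, hn]
  have hDpos : 0 < Wᶜ.ncard := by
    obtain ⟨z, hz⟩ := hDne
    exact (Set.ncard_pos (Set.toFinite _)).mpr ⟨z, hz⟩
  have hm : Wᶜ.ncard < W.ncard := by omega
  have hτ2 : 2 ≤ W.ncard := by omega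
  have hlow : W.ncard ≤ partitionDim G := by
    obtain ⟨P, hP, hPcard⟩ := aux_exists_locating_eq_dim hG
    rw [← hPcard]
    exact aux_W_ncard_le hWu hG hP
  obtain ⟨a, b, haW, hbW, hab⟩ := (Set.one_lt_ncard_iff (Set.toFinite W)).mp hτ2
  rcases aux_W_dichotomy hWu with hind | hcomp
  · -- W independent: partitionDim = W.ncard
    obtain ⟨P, hPloc, hPcard⟩ := aux_caseA hG hWu hind hDne hm
    have hup : partitionDim G ≤ W.ncard := hPcard ▸ aux_partitionDim_le hPloc
    have heq : partitionDim G = W.ncard := le_antisymm hup hlow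
    refine ⟨hlow, by omega, Iff.intro (fun _ => hind) (fun _ => heq), ?_⟩
    exact iff_of_false (by omega) (fun h => hind a haW b hbW (h a haW b hbW hab))
  · -- W complete: W.ncard < partitionDim ≤ (n + W.ncard)/2
    obtain ⟨P, hPloc, hPbound⟩ := aux_caseB hG hWu hcomp hDne hm
    have hup : partitionDim G ≤ P.ncard := aux_partitionDim_le hPloc
    have hneq : partitionDim G ≠ W.ncard := by
      obtain ⟨P₀, hP₀, hP₀card⟩ := aux_exists_locating_eq_dim hG
      rw [← hP₀card]
      exact aux_complete_lower hWu hG hcomp hDne hP₀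
    refine ⟨hlow, by omega, ?_, iff_of_true (by omega) hcomp⟩
    exact iff_of_false hneq (fun h => h a haW b hbW (hcomp a haW b hbW hab))
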